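/- arXiv:1612.08847 — 2 statements merged into one kernel-verified Lean document; each statement's English description precedes it below -/
import Mathlib

section
/- Let n ≥ 1, j ∈ {0,…,n-2}, and let u₀, u₁, …, u_{n-j-1} be an orthonormal basis of an (n-j)-dimensional subspace of ℝⁿ. Define C(u₀, τ) = pos{u₀ ± τ·u₁, …, u₀ ± τ·u_{n-j-1}} for τ ∈ (0,1). Then every unit vector v ∈ C(u₀, τ) satisfies ⟨v, u₀⟩ ≥ 1/√(1 + τ²). -/
open scoped RealInnerProductSpace

/-- If `u 0, …, u (n-j-1)` is an orthonormal family (spanning an `(n-j)`-dimensional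
subspace of `ℝⁿ`), `τ ∈ (0,1)`, and `v` is a unit vector in the positive hull
`C(u₀,τ) = pos{u₀ ± τ·u i : i = 1,…,n-j-1}`, then `⟪v, u₀⟫ ≥ 1/√(1+τ²)`. -/
theorem inner_ge_of_mem_cone (n j : ℕ) (hn : 1 ≤ n) (hj : j ≤ n - 2) (h0 : 0 < n - j)
    (u : Fin (n - j) → EuclideanSpace ℝ (Fin n)) (hu : Orthonormal ℝ u)
    (τ : ℝ) (hτ : τ ∈ Set.Ioo (0 : ℝ) 1)
    (v : EuclideanSpace ℝ (Fin n)) (hv : ‖v‖ = 1)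
    (hvC : ∃ a b : Fin (n - j) → ℝ, (∀ i, 0 ≤ a i) ∧ (∀ i, 0 ≤ b i) ∧
      v = ∑ i ∈ Finset.univ.erase ⟨0, h0⟩,
            (a i • (u ⟨0, h0⟩ + τ • u i) + b i • (u ⟨0, h0⟩ - τ • u i))) :
    ⟪v, u ⟨0, h0⟩⟫ ≥ 1 / Real.sqrt (1 + τ ^ 2) := by
  classical
  obtain ⟨a, b, ha, hb, hveq⟩ := hvC
  set i0 : Fin (n - j) := ⟨0, h0⟩ with hi0
  set S : ℝ := ∑ i ∈ Finset.univ.erase i0, (a i + b i) with hS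
  set c : Fin (n - j) → ℝ := fun i => if i = i0 then S else τ * (a i - b i) with hc
  have hvc : v = ∑ i, c i • u i := by
    have hrhs : ∑ i, c i • u i
        = S • u i0 + ∑ i ∈ Finset.univ.erase i0, (τ * (a i - b i)) • u i := by
      rw [← Finset.add_sum_erase _ (fun i => c i • u i) (Finset.mem_univ i0)]
      have hci0 : c i0 • u i0 = S • u i0 := by rw [hc]; simp
      rw [hci0]
      congr 1
      refine Finset.sum_congr rfl fun i hi => ?_
      rw [hc]; simp [Finset.ne_of_mem_erase hi]
    have hstep : ∀ i ∈ Finset.univ.erase i0,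
        a i • (u i0 + τ • u i) + b i • (u i0 - τ • u i)
          = (a i + b i) • u i0 + (τ * (a i - b i)) • u i := by
      intro i hi; module
    rw [hveq, Finset.sum_congr rfl hstep, Finset.sum_add_distrib, ← Finset.sum_smul, hrhs]
  have hinner : ⟪v, u i0⟫ = S := by
    rw [hvc, real_inner_comm, hu.inner_right_fintype]
    simp [hc]
  have hnorm : S ^ 2 + ∑ i ∈ Finset.univ.erase i0, (τ * (a i - b i)) ^ 2 = 1 := by
    have h1 : ⟪v, v⟫ = 1 := by
      rw [real_inner_self_eq_norm_sq, hv]; norm_num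
    rw [hvc, hu.inner_sum] at h1
    simp only [RCLike.star_def, starRingEnd_apply, star_trivial] at h1
    rw [← Finset.add_sum_erase _ _ (Finset.mem_univ i0)] at h1
    have : ∀ i ∈ Finset.univ.erase i0, c i * c i = (τ * (a i - b i)) ^ 2 := by
      intro i hi
      simp [hc, if_neg (Finset.ne_of_mem_erase hi), sq]
    rw [Finset.sum_congr rfl this] at h1
    simpa [hc, sq] using h1
  have hSnn : 0 ≤ S := Finset.sum_nonneg fun i _ => add_nonneg (ha i) (hb i)
  have hsum_le : ∑ i ∈ Finset.univ.erase i0, (τ * (a i - b i)) ^ 2 ≤ τ ^ 2 * S ^ 2 := by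
    have h1 : ∑ i ∈ Finset.univ.erase i0, (τ * (a i - b i)) ^ 2
        ≤ τ ^ 2 * ∑ i ∈ Finset.univ.erase i0, (a i + b i) ^ 2 := by
      rw [Finset.mul_sum]
      refine Finset.sum_le_sum fun i _ => ?_
      nlinarith [mul_nonneg (ha i) (hb i), sq_nonneg τ]
    have h2 : ∑ i ∈ Finset.univ.erase i0, (a i + b i) ^ 2 ≤ S ^ 2 :=
      Finset.sum_sq_le_sq_sum_of_nonneg fun i _ => add_nonneg (ha i) (hb i)
    calc _ ≤ τ ^ 2 * ∑ i ∈ Finset.univ.erase i0, (a i + b i) ^ 2 := h1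
      _ ≤ τ ^ 2 * S ^ 2 := by nlinarith [sq_nonneg τ]
  have hkey : 1 ≤ S ^ 2 * (1 + τ ^ 2) := by nlinarith
  rw [hinner]
  have hr : (0:ℝ) < Real.sqrt (1 + τ ^ 2) := Real.sqrt_pos.2 (by positivity)
  have hr2 : Real.sqrt (1 + τ ^ 2) ^ 2 = 1 + τ ^ 2 := Real.sq_sqrt (by positivity)
  rw [ge_iff_le, div_le_iff₀ hr]
  nlinarith [mul_nonneg hSnn hr.le, hr2, sq_nonneg (S * Real.sqrt (1 + τ ^ 2) - 1)]
end

section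
/- Let n ≥ 1, j ∈ {0,…,n-2}, and let u₀, u₁, …, u_{n-j-1} be an orthonormal basis of an (n-j)-dimensional subspace of ℝⁿ. Define C(u₀, τ) = pos{u₀ ± τ·u₁, …, u₀ ± τ·u_{n-j-1}} for τ ∈ (0,1). Then every unit vector v ∈ C(u₀, τ) satisfies ‖u₀ − v‖ ≤ √2 · τ. -/
open scoped RealInnerProductSpace


private lemma arith_aux (τ S Q N : ℝ) (hτ0 : 0 < τ) (hτ1 : τ < 1) (hS : 0 ≤ S)
    (h1 : 1 = S ^ 2 + Q) (hQ : Q ≤ τ ^ 2 * S ^ 2) (hN : 0 ≤ N)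
    (h2 : N ^ 2 = (1 - S) ^ 2 + Q) : N ≤ Real.sqrt 2 * τ := by
  have hSge : 1 - τ ^ 2 ≤ S := by nlinarith [sq_nonneg (S - 1), sq_nonneg τ, sq_nonneg S]
  have h2nn : 0 ≤ Real.sqrt 2 * τ := mul_nonneg (Real.sqrt_nonneg 2) hτ0.le
  have hfin : N ^ 2 ≤ (Real.sqrt 2 * τ) ^ 2 := by
    have hsq : (Real.sqrt 2 * τ) ^ 2 = 2 * τ ^ 2 := by
      rw [mul_pow, Real.sq_sqrt (by norm_num : (0:ℝ) ≤ 2)]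
    rw [hsq, h2]; nlinarith
  exact (pow_le_pow_iff_left₀ hN h2nn two_ne_zero).mp hfin


/-- If `u 0, …, u (n-j-1)` is an orthonormal family (spanning an `(n-j)`-dimensional
subspace of `ℝⁿ`), `τ ∈ (0,1)`, and `v` is a unit vector in the positive hull
`C(u₀,τ) = pos{u₀ ± τ·u i : i = 1,…,n-j-1}`, then `‖u₀ − v‖ ≤ √2 · τ`. -/
theorem dist_le_of_mem_cone (n j : ℕ) (hn : 1 ≤ n) (hj : j ≤ n - 2) (h0 : 0 < n - j)
    (u : Fin (n - j) → EuclideanSpace ℝ (Fin n)) (hu : Orthonormal ℝ u)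
    (τ : ℝ) (hτ : τ ∈ Set.Ioo (0 : ℝ) 1)
    (v : EuclideanSpace ℝ (Fin n)) (hv : ‖v‖ = 1)
    (hvC : ∃ a b : Fin (n - j) → ℝ, (∀ i, 0 ≤ a i) ∧ (∀ i, 0 ≤ b i) ∧
      v = ∑ i ∈ Finset.univ.erase ⟨0, h0⟩,
            (a i • (u ⟨0, h0⟩ + τ • u i) + b i • (u ⟨0, h0⟩ - τ • u i))) :
    ‖u ⟨0, h0⟩ - v‖ ≤ Real.sqrt 2 * τ := by
  classical
  obtain ⟨a, b, ha, hb, hvsum⟩ := hvC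
  obtain ⟨hτ0, hτ1⟩ := hτ
  set z : Fin (n - j) := ⟨0, h0⟩ with hz
  set T : Finset (Fin (n - j)) := Finset.univ.erase z with hT
  set S : ℝ := ∑ i ∈ T, (a i + b i) with hS
  set c : Fin (n - j) → ℝ := fun i => τ * (a i - b i) with hc
  set l : Fin (n - j) → ℝ := fun i => if i = z then S else c i with hl
  have huniv : (Finset.univ : Finset (Fin (n - j))) = insert z T := by
    rw [hT, Finset.insert_erase (Finset.mem_univ z)]
  have hvl : v = ∑ i, l i • u i := by
    rw [huniv, Finset.sum_insert (Finset.notMem_erase z _)]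
    have hlz : l z • u z = S • u z := by simp [hl]
    rw [hlz, hvsum]
    have h1 : ∀ i ∈ T, (a i • (u z + τ • u i) + b i • (u z - τ • u i))
        = (a i + b i) • u z + c i • u i := by
      intro i hi
      simp only [smul_add, smul_sub, hc, smul_smul]
      module
    rw [Finset.sum_congr rfl h1, Finset.sum_add_distrib, ← Finset.sum_smul]
    congr 1
    refine Finset.sum_congr rfl fun i hi => ?_
    simp [hl, Finset.ne_of_mem_erase hi]
  set m : Fin (n - j) → ℝ := fun i => (if i = z then 1 else 0) - l i with hm
  have hwl : u z - v = ∑ i, m i • u i := by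
    rw [hvl]
    have huz : u z = ∑ i, (if i = z then (1:ℝ) else 0) • u i := by
      simp [Finset.sum_ite_eq' Finset.univ z]
    rw [huz, ← Finset.sum_sub_distrib]
    exact Finset.sum_congr rfl fun i _ => by rw [hm, sub_smul]
  have hnv : (1:ℝ) = ∑ i, l i * l i := by
    have h := hu.inner_sum l l Finset.univ
    rw [← hvl, real_inner_self_eq_norm_sq, hv] at h
    simpa using h
  have hnw : ‖u z - v‖ ^ 2 = ∑ i, m i * m i := by
    have h := hu.inner_sum m m Finset.univ
    rw [← hwl, real_inner_self_eq_norm_sq] at h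
    simpa using h
  set Q : ℝ := ∑ i ∈ T, c i * c i with hQ
  have h1 : (1:ℝ) = S ^ 2 + Q := by
    rw [hnv, huniv, Finset.sum_insert (Finset.notMem_erase z _)]
    have hrest : ∑ i ∈ T, l i * l i = Q := by
      refine Finset.sum_congr rfl fun i hi => ?_
      simp [hl, Finset.ne_of_mem_erase hi]
    rw [hrest]
    have : l z = S := by simp [hl]
    rw [this]; ring
  have h2 : ‖u z - v‖ ^ 2 = (1 - S) ^ 2 + Q := by
    rw [hnw, huniv, Finset.sum_insert (Finset.notMem_erase z _)]
    have hrest : ∑ i ∈ T, m i * m i = Q := by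
      refine Finset.sum_congr rfl fun i hi => ?_
      have hne : i ≠ z := Finset.ne_of_mem_erase hi
      simp [hm, hl, hne]
    rw [hrest]
    have : m z = 1 - S := by simp [hm, hl]
    rw [this]; ring
  have hS0 : 0 ≤ S := Finset.sum_nonneg fun i _ => add_nonneg (ha i) (hb i)
  have hQle : Q ≤ τ ^ 2 * S ^ 2 := by
    have step1 : Q ≤ τ ^ 2 * ∑ i ∈ T, (a i + b i) ^ 2 := by
      rw [hQ, Finset.mul_sum]
      refine Finset.sum_le_sum fun i _ => ?_
      simp only [hc]
      nlinarith [mul_nonneg (ha i) (hb i), sq_nonneg τ]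
    have step2 : ∑ i ∈ T, (a i + b i) ^ 2 ≤ S ^ 2 := by
      have hle : ∀ i ∈ T, (a i + b i) ^ 2 ≤ (a i + b i) * S := by
        intro i hi
        have hles : a i + b i ≤ S := Finset.single_le_sum
          (fun k _ => add_nonneg (ha k) (hb k)) hi
        nlinarith [add_nonneg (ha i) (hb i)]
      calc ∑ i ∈ T, (a i + b i) ^ 2 ≤ ∑ i ∈ T, (a i + b i) * S :=
            Finset.sum_le_sum hle
        _ = S ^ 2 := by rw [← Finset.sum_mul]; ring
    calc Q ≤ τ ^ 2 * ∑ i ∈ T, (a i + b i) ^ 2 := step1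
      _ ≤ τ ^ 2 * S ^ 2 := by
          exact mul_le_mul_of_nonneg_left step2 (sq_nonneg τ)
  exact arith_aux τ S Q _ hτ0 hτ1 hS0 h1 hQle (norm_nonneg _) h2
end
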